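/- arXiv:1004.2930 — 5 statements merged into one kernel-verified Lean document; each statement's English description precedes it below -/
import Mathlib

section
/- Let g₁, g₂ : ℝ → ℝ, let γ ∈ ℝ with g₁(γ) = γ and g₂(γ) = γ, and let r₁, r₂ be positive natural numbers. Suppose there exist nonzero real constants C₁, C₂ such that (g₁(x) − γ)/(x − γ)^{r₁} → C₁ and (g₂(x) − γ)/(x − γ)^{r₂} → C₂ as x → γ with x ≠ γ. Then (g₁(g₂(x)) − γ)/(x − γ)^{r₁·r₂} → C₁·C₂^{r₁} as x → γ with x ≠ γ. In particular, the composite iterative function g₁ ∘ g₂ has convergence order r₁·r₂. -/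
open Filter Topology

/-- Traub's composition theorem (two-function case): if `g₁` has convergence order
`r₁` with asymptotic error constant `C₁ ≠ 0` at the common fixed point `γ`, and `g₂`
has order `r₂` with constant `C₂ ≠ 0`, then `g₁ ∘ g₂` has order `r₁ * r₂` with
constant `C₁ * C₂ ^ r₁`. -/
theorem stmt_4 (g₁ g₂ : ℝ → ℝ) (γ : ℝ)
    (hg₁ : g₁ γ = γ) (hg₂ : g₂ γ = γ)
    (r₁ r₂ : ℕ) (hr₁ : 0 < r₁) (hr₂ : 0 < r₂)
    (C₁ C₂ : ℝ) (hC₁ : C₁ ≠ 0) (hC₂ : C₂ ≠ 0)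
    (h₁ : Tendsto (fun x => (g₁ x - γ) / (x - γ) ^ r₁) (𝓝[≠] γ) (𝓝 C₁))
    (h₂ : Tendsto (fun x => (g₂ x - γ) / (x - γ) ^ r₂) (𝓝[≠] γ) (𝓝 C₂)) :
    Tendsto (fun x => (g₁ (g₂ x) - γ) / (x - γ) ^ (r₁ * r₂)) (𝓝[≠] γ)
      (𝓝 (C₁ * C₂ ^ r₁)) := by
  -- x ≠ γ eventually
  have hxne : ∀ᶠ x in 𝓝[≠] γ, x ≠ γ := eventually_mem_nhdsWithin
  -- eventually the ratio for g₂ is nonzero, hence g₂ x ≠ γ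
  have hne : ∀ᶠ x in 𝓝[≠] γ, g₂ x ≠ γ := by
    filter_upwards [h₂.eventually_ne hC₂] with x hx
    intro h
    apply hx
    simp [h]
  -- g₂ x - γ → 0
  have hpow : Tendsto (fun x : ℝ => (x - γ) ^ r₂) (𝓝[≠] γ) (𝓝 0) := by
    have : Tendsto (fun x : ℝ => (x - γ) ^ r₂) (𝓝 γ) (𝓝 ((γ - γ) ^ r₂)) := by
      exact (continuous_id.sub continuous_const).pow r₂ |>.tendsto γ
    simpa [zero_pow hr₂.ne'] using this.mono_left nhdsWithin_le_nhds
  have hsub : Tendsto (fun x => g₂ x - γ) (𝓝[≠] γ) (𝓝 0) := by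
    have := h₂.mul hpow
    rw [mul_zero] at this
    refine this.congr' ?_
    filter_upwards [hxne] with x hx
    have hx' : (x - γ) ^ r₂ ≠ 0 := pow_ne_zero _ (sub_ne_zero.mpr hx)
    field_simp
  have hg₂t : Tendsto g₂ (𝓝[≠] γ) (𝓝[≠] γ) := by
    apply tendsto_nhdsWithin_iff.mpr
    constructor
    · have : Tendsto (fun x => g₂ x - γ + γ) (𝓝[≠] γ) (𝓝 (0 + γ)) :=
        hsub.add tendsto_const_nhds
      simpa using this
    · simpa [Set.mem_compl_iff] using hne
  have hcomp : Tendsto (fun x => (g₁ (g₂ x) - γ) / (g₂ x - γ) ^ r₁) (𝓝[≠] γ) (𝓝 C₁) :=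
    h₁.comp hg₂t
  have hpowr : Tendsto (fun x => ((g₂ x - γ) / (x - γ) ^ r₂) ^ r₁) (𝓝[≠] γ) (𝓝 (C₂ ^ r₁)) :=
    h₂.pow r₁
  have := hcomp.mul hpowr
  refine this.congr' ?_
  filter_upwards [hxne, hne] with x hx hgx
  have h1 : (g₂ x - γ) ≠ 0 := sub_ne_zero.mpr hgx
  have h2 : (x - γ) ≠ 0 := sub_ne_zero.mpr hx
  rw [div_pow, ← pow_mul, mul_comm r₂ r₁]
  field_simp
end

section
/- Let f : ℝ → ℝ be twice continuously differentiable on an open interval D containing a point γ with f(γ) = 0 and f'(γ) ≠ 0, and let N(x) = x − f(x)/f'(x) be the Newton iteration map. Then f(N(x))/(x − γ)² → f''(γ)/2 as x → γ with x ≠ γ. -/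
open Filter Topology

/-- For a simple zero `γ` of a `C²` function `f` on an open interval `D`, and `N` the
Newton map, `f(N x)/(x - γ)² → f''(γ)/2` as `x → γ`, `x ≠ γ`. -/
theorem stmt_6 (f : ℝ → ℝ) (D : Set ℝ) (hD : IsOpen D) (hDconn : D.OrdConnected)
    (γ : ℝ) (hγ : γ ∈ D) (hf : ContDiffOn ℝ 2 f D)
    (hf0 : f γ = 0) (hf' : deriv f γ ≠ 0) :
    Tendsto (fun x => f (x - f x / deriv f x) / (x - γ) ^ 2) (𝓝[≠] γ)
      (𝓝 (iteratedDeriv 2 f γ / 2)) := by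
  set f₁ : ℝ → ℝ := deriv f with hf₁
  set f₂ : ℝ → ℝ := deriv (deriv f) with hf₂
  set N : ℝ → ℝ := fun x => x - f x / f₁ x with hN
  -- regularity facts
  have hf1 : ContDiffOn ℝ 1 f₁ D := hf.deriv_of_isOpen hD (by norm_num)
  have hfd : DifferentiableOn ℝ f D := hf.differentiableOn (by norm_num)
  have hf1d : DifferentiableOn ℝ f₁ D := hf1.differentiableOn (by norm_num)
  have hf2c : ContinuousOn f₂ D := hf1.continuousOn_deriv_of_isOpen hD le_rfl
  have hγnhds : D ∈ 𝓝 γ := hD.mem_nhds hγ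
  have hfdAt : ∀ x ∈ D, DifferentiableAt ℝ f x := fun x hx =>
    (hfd x hx).differentiableAt (hD.mem_nhds hx)
  have hf1dAt : ∀ x ∈ D, DifferentiableAt ℝ f₁ x := fun x hx =>
    (hf1d x hx).differentiableAt (hD.mem_nhds hx)
  have hfC : ContinuousAt f γ := (hfdAt γ hγ).continuousAt
  have hf1C : ContinuousAt f₁ γ := (hf1dAt γ hγ).continuousAt
  have hf2C : ContinuousAt f₂ γ := (hf2c γ hγ).continuousAt hγnhds
  -- eventually x ∈ D and f₁ x ≠ 0
  have hev : ∀ᶠ x in 𝓝 γ, x ∈ D ∧ f₁ x ≠ 0 :=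
    (hD.eventually_mem hγ).and (hf1C.eventually_ne hf')
  -- N is continuous at γ with N γ = γ
  have hNγ : N γ = γ := by simp [hN, hf0]
  have hNC : ContinuousAt N γ := by
    exact continuousAt_id.sub (hfC.div hf1C hf')
  have hNtend : Tendsto N (𝓝 γ) (𝓝 γ) := by
    simpa [hNγ] using hNC.tendsto
  -- eventually N x ∈ D and f₁ (N x) makes sense
  have hevN : ∀ᶠ x in 𝓝 γ, N x ∈ D := hNtend.eventually (hD.eventually_mem hγ)
  -- the derivative of f ∘ N
  have key : ∀ᶠ x in 𝓝 γ, HasDerivAt (fun y => f (N y))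
      (f₁ (N x) * (f x * f₂ x / (f₁ x) ^ 2)) x := by
    filter_upwards [hev, hevN] with x hx hNx
    obtain ⟨hxD, hx0⟩ := hx
    have h1 : HasDerivAt f (f₁ x) x := (hfdAt x hxD).hasDerivAt
    have h2 : HasDerivAt f₁ (f₂ x) x := (hf1dAt x hxD).hasDerivAt
    have hNd : HasDerivAt N (f x * f₂ x / (f₁ x) ^ 2) x := by
      have := (hasDerivAt_id x).sub (h1.div h2 hx0)
      refine this.congr_deriv ?_
      field_simp
      ring
    have h3 : HasDerivAt f (f₁ (N x)) (N x) := (hfdAt (N x) hNx).hasDerivAt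
    exact h3.comp x hNd
  -- the denominator
  have keyg : ∀ x : ℝ, HasDerivAt (fun y => (y - γ) ^ 2) (2 * (x - γ)) x := by
    intro x
    have := ((hasDerivAt_id x).sub_const γ).pow 2
    simpa [Function.comp_def, Pi.pow_def] using this
  -- apply L'Hôpital
  have hiter : iteratedDeriv 2 f γ = f₂ γ := by
    simp [iteratedDeriv_succ, iteratedDeriv_zero, hf₂]
  rw [hiter]
  apply HasDerivAt.lhopital_zero_nhdsNE
    (f' := fun x => f₁ (N x) * (f x * f₂ x / (f₁ x) ^ 2))
    (g' := fun x => 2 * (x - γ))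
  · exact (key.filter_mono nhdsWithin_le_nhds)
  · exact Eventually.of_forall fun x => keyg x
  · filter_upwards [self_mem_nhdsWithin] with x hx
    have : x - γ ≠ 0 := sub_ne_zero.mpr hx
    positivity
  · have : Tendsto (fun x => f (N x)) (𝓝 γ) (𝓝 0) := by
      have := hfC.tendsto.comp hNtend
      simpa [hNγ, hf0, Function.comp_def] using this
    exact this.mono_left nhdsWithin_le_nhds
  · have : Tendsto (fun x : ℝ => (x - γ) ^ 2) (𝓝 γ) (𝓝 0) := by
      have : ContinuousAt (fun x : ℝ => (x - γ) ^ 2) γ := by fun_prop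
      simpa using this.tendsto
    exact this.mono_left nhdsWithin_le_nhds
  · -- the quotient of derivatives tends to f₂ γ / 2
    have heq : ∀ x : ℝ, f₁ (N x) * (f x * f₂ x / (f₁ x) ^ 2) / (2 * (x - γ))
        = (f₁ (N x) * f₂ x / (f₁ x) ^ 2 / 2) * (f x / (x - γ)) := by
      intro x
      rw [div_eq_mul_inv, div_eq_mul_inv, div_eq_mul_inv, div_eq_mul_inv, div_eq_mul_inv,
        mul_inv]
      ring
    simp only [heq]
    have hslope : Tendsto (fun x => f x / (x - γ)) (𝓝[≠] γ) (𝓝 (f₁ γ)) := by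
      have h := hasDerivAt_iff_tendsto_slope.mp (hfdAt γ hγ).hasDerivAt
      apply h.congr
      intro x
      simp [slope_def_field, hf0]
    have hc : Tendsto (fun x => f₁ (N x) * f₂ x / (f₁ x) ^ 2 / 2) (𝓝[≠] γ)
        (𝓝 (f₁ γ * f₂ γ / (f₁ γ) ^ 2 / 2)) := by
      apply Tendsto.mono_left _ nhdsWithin_le_nhds
      exact ((((hf1C.tendsto.comp hNtend).mul hf2C.tendsto).div
        (hf1C.tendsto.pow 2) (by positivity)).div_const 2)
    have := hc.mul hslope
    convert this using 2
    field_simp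
end

section
/- Let f : ℝ → ℝ be three times continuously differentiable on an open interval D containing a point γ with f(γ) = 0 and f'(γ) ≠ 0, and let N(x) = x − f(x)/f'(x) be the Newton iteration map. Then the double Newton map N ∘ N satisfies (N(N(x)) − γ)/(x − γ)⁴ → (f''(γ)/(2·f'(γ)))³ as x → γ with x ≠ γ. In particular, the double Newton method x_{n+1} = N(N(x_n)) is fourth-order convergent. -/
open Filter Topology

/-- The double Newton method is fourth-order convergent: for a simple zero `γ` of a
`C³` function `f` on an open interval `D`, with `N x = x - f x / f' x`, one has
`(N(N x) - γ)/(x - γ)⁴ → (f''(γ)/(2 f'(γ)))³` as `x → γ`, `x ≠ γ`. -/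
theorem stmt_7 (f : ℝ → ℝ) (D : Set ℝ) (hD : IsOpen D) (hDconn : D.OrdConnected)
    (γ : ℝ) (hγ : γ ∈ D) (hf : ContDiffOn ℝ 3 f D)
    (hf0 : f γ = 0) (hf' : deriv f γ ≠ 0)
    (N : ℝ → ℝ) (hN : ∀ x, N x = x - f x / deriv f x) :
    Tendsto (fun x => (N (N x) - γ) / (x - γ) ^ 4) (𝓝[≠] γ)
      (𝓝 ((iteratedDeriv 2 f γ / (2 * deriv f γ)) ^ 3)) := by
  set f1 := deriv f with hf1def
  set f2 := deriv f1 with hf2def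
  set C := f2 γ / (2 * f1 γ) with hCdef
  have hf1 : ContDiffOn ℝ 2 f1 D := hf.deriv_of_isOpen hD (by norm_num)
  have hf2 : ContDiffOn ℝ 1 f2 D := hf1.deriv_of_isOpen hD (by norm_num)
  have hDnhds : D ∈ 𝓝 γ := hD.mem_nhds hγ
  have hDev : ∀ᶠ x in 𝓝 γ, x ∈ D := hDnhds
  -- continuity facts
  have hcf : ContinuousAt f γ := (hf.continuousOn.continuousAt hDnhds)
  have hcf1 : ContinuousAt f1 γ := (hf1.continuousOn.continuousAt hDnhds)
  have hcf2 : ContinuousAt f2 γ := (hf2.continuousOn.continuousAt hDnhds)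
  -- derivative facts on D
  have hder1 : ∀ x ∈ D, HasDerivAt f1 (f2 x) x := fun x hx =>
    ((hf1.differentiableOn two_ne_zero).differentiableAt (hD.mem_nhds hx)).hasDerivAt
  have hderf : ∀ x ∈ D, HasDerivAt f (f1 x) x := fun x hx =>
    ((hf.differentiableOn (by norm_num)).differentiableAt (hD.mem_nhds hx)).hasDerivAt
  -- Step A: L'Hôpital
  have hA : Tendsto (fun x => (f1 x * (x - γ) - f x) / (x - γ) ^ 2) (𝓝[≠] γ)
      (𝓝 (f2 γ / 2)) := by
    apply HasDerivAt.lhopital_zero_nhdsNE (f' := fun x => f2 x * (x - γ))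
      (g' := fun x => 2 * (x - γ))
    · filter_upwards [hDev.filter_mono nhdsWithin_le_nhds] with x hx
      have h1 : HasDerivAt (fun x => f1 x * (x - γ) - f x)
          (f2 x * (x - γ) + f1 x * 1 - f1 x) x :=
        (((hder1 x hx).mul ((hasDerivAt_id x).sub_const γ)).sub (hderf x hx))
      convert h1 using 1; ring
    · filter_upwards with x
      have h1 : HasDerivAt (fun x => (x - γ) ^ 2) ((2 : ℕ) * (x - γ) ^ 1 * 1) x :=
        ((hasDerivAt_id x).sub_const γ).pow 2
      convert h1 using 1; push_cast; ring
    · filter_upwards [self_mem_nhdsWithin] with x (hx : x ≠ γ)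
      exact mul_ne_zero two_ne_zero (sub_ne_zero.2 hx)
    · have h1 : ContinuousAt (fun x => f1 x * (x - γ) - f x) γ :=
        (hcf1.mul ((continuousAt_id.sub continuousAt_const))).sub hcf
      have h0 : Tendsto (fun x => f1 x * (x - γ) - f x) (𝓝[≠] γ)
          (𝓝 (f1 γ * (γ - γ) - f γ)) := h1.tendsto.mono_left nhdsWithin_le_nhds
      simpa [hf0] using h0
    · have h1 : ContinuousAt (fun x => (x - γ) ^ 2) γ :=
        ((continuousAt_id.sub continuousAt_const)).pow 2
      have h0 : Tendsto (fun x => (x - γ) ^ 2) (𝓝[≠] γ) (𝓝 ((γ - γ) ^ 2)) :=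
        h1.tendsto.mono_left nhdsWithin_le_nhds
      simpa using h0
    · have h0 : Tendsto (fun x => f2 x / 2) (𝓝[≠] γ) (𝓝 (f2 γ / 2)) :=
        (hcf2.tendsto.mono_left nhdsWithin_le_nhds).div_const 2
      apply h0.congr'
      filter_upwards [self_mem_nhdsWithin] with x (hx : x ≠ γ)
      have hxne : x - γ ≠ 0 := sub_ne_zero.2 hx
      field_simp
  -- Step B: Newton map quadratic convergence
  have hf1ne : ∀ᶠ x in 𝓝 γ, f1 x ≠ 0 := hcf1.eventually_ne hf'
  have hB : Tendsto (fun x => (N x - γ) / (x - γ) ^ 2) (𝓝[≠] γ) (𝓝 C) := by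
    have hinv : Tendsto (fun x => 1 / f1 x) (𝓝[≠] γ) (𝓝 (1 / f1 γ)) :=
      Tendsto.div tendsto_const_nhds (hcf1.tendsto.mono_left nhdsWithin_le_nhds) hf'
    have h0 : Tendsto (fun x => (f1 x * (x - γ) - f x) / (x - γ) ^ 2 * (1 / f1 x))
        (𝓝[≠] γ) (𝓝 (f2 γ / 2 * (1 / f1 γ))) := hA.mul hinv
    have hCeq : C = f2 γ / 2 * (1 / f1 γ) := by
      rw [hCdef]; field_simp
    rw [hCeq]
    apply h0.congr'
    filter_upwards [hf1ne.filter_mono nhdsWithin_le_nhds] with x hx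
    rw [hN x]
    field_simp
    ring
  -- the auxiliary function g
  set g : ℝ → ℝ := fun x => if x = γ then C else (N x - γ) / (x - γ) ^ 2 with hgdef
  have hNγ0 : N γ = γ := by rw [hN γ, hf0]; simp
  have hg_eq : ∀ y, N y - γ = g y * (y - γ) ^ 2 := by
    intro y
    by_cases hy : y = γ
    · subst hy; simp [hgdef, hNγ0]
    · simp only [hgdef, if_neg hy]
      rw [div_mul_cancel₀]
      exact pow_ne_zero 2 (sub_ne_zero.2 hy)
  have hgC : Tendsto g (𝓝 γ) (𝓝 C) := by
    rw [← nhdsNE_sup_pure γ, tendsto_sup]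
    constructor
    · apply hB.congr'
      filter_upwards [self_mem_nhdsWithin] with x (hx : x ≠ γ)
      simp [hgdef, if_neg hx]
    · rw [tendsto_pure_left]
      intro s hs
      have : g γ = C := by simp [hgdef]
      rw [this]; exact mem_of_mem_nhds hs
  -- N tends to γ
  have hNγ : Tendsto N (𝓝[≠] γ) (𝓝 γ) := by
    have hsq : Tendsto (fun x => (x - γ) ^ 2) (𝓝[≠] γ) (𝓝 ((γ - γ) ^ 2)) :=
      (((continuousAt_id.sub continuousAt_const)).pow 2).tendsto.mono_left nhdsWithin_le_nhds
    have hsq0 : Tendsto (fun x => (x - γ) ^ 2) (𝓝[≠] γ) (𝓝 0) := by simpa using hsq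
    have h1 : Tendsto (fun x => g x * (x - γ) ^ 2) (𝓝[≠] γ) (𝓝 (C * 0)) :=
      (hgC.mono_left nhdsWithin_le_nhds).mul hsq0
    have h2 : Tendsto (fun x => g x * (x - γ) ^ 2 + γ) (𝓝[≠] γ) (𝓝 (C * 0 + γ)) :=
      h1.add tendsto_const_nhds
    simp only [mul_zero, zero_add] at h2
    apply h2.congr
    intro x
    have := hg_eq x
    linarith [hg_eq x]
  -- conclusion
  have hC3 : (iteratedDeriv 2 f γ / (2 * deriv f γ)) ^ 3 = C * C ^ 2 := by
    have h2 : iteratedDeriv 2 f γ = f2 γ := by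
      rw [iteratedDeriv_succ, iteratedDeriv_one]
    rw [h2, hCdef, ← hf1def]; ring
  rw [hC3]
  have hfinal : Tendsto (fun x => g (N x) * (g x) ^ 2) (𝓝[≠] γ) (𝓝 (C * C ^ 2)) :=
    (hgC.comp hNγ).mul ((hgC.mono_left nhdsWithin_le_nhds).pow 2)
  apply hfinal.congr'
  filter_upwards [self_mem_nhdsWithin] with x (hx : x ≠ γ)
  have hx4 : (x - γ) ^ 4 ≠ 0 := pow_ne_zero 4 (sub_ne_zero.2 hx)
  have key : N (N x) - γ = g (N x) * g x ^ 2 * (x - γ) ^ 4 := by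
    rw [hg_eq (N x), hg_eq x]; ring
  rw [eq_comm, key, mul_div_cancel_right₀ _ hx4]
end

section
/- Let γ be a simple zero (f(γ) = 0, f'(γ) ≠ 0) of a function f : ℝ → ℝ that is four times continuously differentiable on an open interval D containing γ. Define the M-4 iteration map by G(x) = y − f(y)/(2·((f(y) − f(x))/(y − x)) − f'(x)), where y = x − f(x)/f'(x). Then, writing c_m = f^{(m)}(γ)/m!, one has (G(x) − γ)/(x − γ)⁴ → −(c₃·c₁ − c₂²)·c₂/c₁³ as x → γ with x ≠ γ. In particular, the iterative method x_{n+1} = G(x_n) is fourth-order convergent with error equation e_{n+1} = −((c₃ c₁ − c₂²) c₂ / c₁³)·e_n⁴ + O(e_n⁵), where e_n = x_n − γ. -/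
open Filter Topology

lemma taylor_peano : ∀ (n : ℕ) (f : ℝ → ℝ) (s : Set ℝ), IsOpen s → ∀ γ, γ ∈ s →
    ContDiffOn ℝ n f s →
    Tendsto (fun x => (f x - ∑ m ∈ Finset.range (n+1),
        iteratedDeriv m f γ / (Nat.factorial m : ℝ) * (x - γ) ^ m) / (x - γ) ^ n)
      (𝓝[≠] γ) (𝓝 0) := by
  intro n
  induction n with
  | zero =>
    intro f s hs γ hγ hf
    simp only [Finset.sum_range_one, pow_zero, div_one, iteratedDeriv_zero, Nat.factorial_zero,
      Nat.cast_one]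
    have hcont : ContinuousAt f γ := hf.continuousOn.continuousAt (hs.mem_nhds hγ)
    have := (hcont.tendsto.sub_const (f γ)).mono_left (nhdsWithin_le_nhds (s := {γ}ᶜ))
    simpa using this
  | succ n ih =>
    intro f s hs γ hγ hf
    set a : ℕ → ℝ := fun m => iteratedDeriv m f γ / (Nat.factorial m : ℝ) with ha
    set R : ℝ → ℝ := fun x => f x - ∑ m ∈ Finset.range (n+2), a m * (x - γ) ^ m with hR
    set R' : ℝ → ℝ := fun x => deriv f x - ∑ m ∈ Finset.range (n+1), (m+1 : ℝ) * a (m+1) * (x - γ) ^ m with hR'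
    -- derivative of R
    have hder : ∀ ξ ∈ s, HasDerivAt R (R' ξ) ξ := by
      intro ξ hξ
      have hfd : HasDerivAt f (deriv f ξ) ξ := by
        have : DifferentiableAt ℝ f ξ :=
          (hf.differentiableOn (by simp)).differentiableAt
            (hs.mem_nhds hξ)
        exact this.hasDerivAt
      have hpoly : HasDerivAt (fun x => ∑ m ∈ Finset.range (n+2), a m * (x - γ) ^ m)
          (∑ m ∈ Finset.range (n+1), (m+1 : ℝ) * a (m+1) * (ξ - γ) ^ m) ξ := by
        have h1 : HasDerivAt (fun x => ∑ m ∈ Finset.range (n+2), a m * (x - γ) ^ m)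
            (∑ m ∈ Finset.range (n+2), a m * ((m : ℝ) * (ξ - γ) ^ (m-1))) ξ := by
          apply HasDerivAt.fun_sum
          intro m _
          have hx : HasDerivAt (fun x : ℝ => x - γ) 1 ξ := (hasDerivAt_id ξ).sub_const γ
          have := (hx.pow m)
          simpa using this.const_mul (a m)
        have h2 : (∑ m ∈ Finset.range (n+2), a m * ((m : ℝ) * (ξ - γ) ^ (m-1)))
            = ∑ m ∈ Finset.range (n+1), (m+1 : ℝ) * a (m+1) * (ξ - γ) ^ m := by
          rw [Finset.sum_range_succ' (fun m => a m * ((m : ℝ) * (ξ - γ) ^ (m-1))) (n+1)]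
          simp only [Nat.cast_zero, zero_mul, mul_zero, add_zero, Nat.add_sub_cancel]
          apply Finset.sum_congr rfl
          intro m _
          push_cast
          ring
        rwa [h2] at h1
      exact hfd.sub hpoly
    -- induction hypothesis applied to deriv f
    have hdf : ContDiffOn ℝ n (deriv f) s := by
      apply hf.deriv_of_isOpen hs
      exact_mod_cast le_refl ((n : WithTop ℕ∞) + 1)
    have ihd := ih (deriv f) s hs γ hγ hdf
    have hihd : Tendsto (fun ξ => R' ξ / (ξ - γ) ^ n) (𝓝[≠] γ) (𝓝 0) := by
      apply ihd.congr
      intro ξ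
      congr 1
      simp only [hR']
      congr 1
      apply Finset.sum_congr rfl
      intro m _
      rw [← iteratedDeriv_succ']
      rw [ha]
      simp only []
      rw [Nat.factorial_succ]
      push_cast
      have h0 : (Nat.factorial m : ℝ) ≠ 0 := by positivity
      field_simp
    -- R' γ = 0
    have hR'0 : R' γ = 0 := by
      simp only [hR']
      rw [Finset.sum_eq_single 0]
      · simp [ha, iteratedDeriv_one]
      · intro m _ hm
        simp [sub_self, zero_pow hm]
      · simp
    -- now the ε-δ argument
    rw [NormedAddCommGroup.tendsto_nhds_zero]
    intro ε hε
    have hε2 : 0 < ε/2 := by linarith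
    have h1 : ∀ᶠ ξ in 𝓝[≠] γ, ‖R' ξ / (ξ - γ) ^ n‖ < ε/2 := by
      have := Metric.tendsto_nhds.mp hihd (ε/2) hε2
      simpa [Real.dist_eq, Real.norm_eq_abs] using this
    have h1' : ∀ᶠ ξ in 𝓝[≠] γ, |R' ξ| ≤ ε/2 * |ξ - γ| ^ n := by
      filter_upwards [h1, self_mem_nhdsWithin] with ξ hξ hne
      have hne' : ξ - γ ≠ 0 := sub_ne_zero.2 hne
      have hpos : (0:ℝ) < ‖ξ - γ‖ ^ n := pow_pos (norm_pos_iff.2 hne') n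
      rw [norm_div, norm_pow, div_lt_iff₀ hpos] at hξ
      simpa [Real.norm_eq_abs] using hξ.le
    have h2 : ∀ᶠ ξ in 𝓝 γ, |R' ξ| ≤ ε/2 * |ξ - γ| ^ n := by
      rw [← nhdsNE_sup_pure γ, eventually_sup]
      refine ⟨h1', ?_⟩
      simp only [eventually_pure, hR'0, abs_zero]
      positivity
    obtain ⟨r, hr, hball⟩ := Metric.eventually_nhds_iff_ball.1 (h2.and (hs.eventually_mem hγ))
    have hbmem : Metric.ball γ r ∈ 𝓝 γ := Metric.ball_mem_nhds γ hr
    filter_upwards [nhdsWithin_le_nhds hbmem, self_mem_nhdsWithin] with x hx hne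
    have hne' : x - γ ≠ 0 := sub_ne_zero.2 hne
    -- MVT on the segment
    have hseg : segment ℝ γ x ⊆ Metric.ball γ r :=
      (convex_ball γ r).segment_subset (Metric.mem_ball_self hr) hx
    have hbound : ∀ ξ ∈ segment ℝ γ x, ‖R' ξ‖ ≤ ε/2 * |x - γ| ^ n := by
      intro ξ hξ
      have h3 : |ξ - γ| ≤ |x - γ| := by
        rw [segment_eq_uIcc, Set.mem_uIcc] at hξ
        have l1 := le_abs_self (x - γ)
        have l2 := neg_abs_le (x - γ)
        rcases hξ with ⟨h4, h5⟩ | ⟨h4, h5⟩ <;>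
          · rw [abs_le]; constructor <;> linarith
      calc ‖R' ξ‖ ≤ ε/2 * |ξ - γ| ^ n := (hball ξ (hseg hξ)).1
        _ ≤ ε/2 * |x - γ| ^ n := by
            apply mul_le_mul_of_nonneg_left _ (le_of_lt hε2)
            exact pow_le_pow_left₀ (abs_nonneg _) h3 n
    have hmvt := Convex.norm_image_sub_le_of_norm_hasDerivWithin_le
      (f := R) (f' := R') (s := segment ℝ γ x)
      (fun ξ hξ => (hder ξ ((hball ξ (hseg hξ)).2)).hasDerivWithinAt)
      hbound (convex_segment γ x) (left_mem_segment ℝ γ x) (right_mem_segment ℝ γ x)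
    have hRγ : R γ = 0 := by
      simp only [hR]
      rw [Finset.sum_eq_single 0]
      · simp [ha, iteratedDeriv_zero]
      · intro m _ hm
        simp [sub_self, zero_pow hm]
      · simp
    rw [hRγ, sub_zero] at hmvt
    have hfinal : ‖R x / (x - γ) ^ (n+1)‖ ≤ ε/2 := by
      rw [norm_div, norm_pow]
      rw [div_le_iff₀ (pow_pos (norm_pos_iff.2 hne') (n+1))]
      calc ‖R x‖ ≤ ε/2 * |x - γ| ^ n * ‖x - γ‖ := hmvt
        _ = ε/2 * ‖x - γ‖ ^ (n+1) := by rw [Real.norm_eq_abs]; ring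
    calc ‖R x / (x - γ) ^ (n+1)‖ ≤ ε/2 := hfinal
      _ < ε := by linarith

def Ufun (k1 k2 k3 k4 e a : ℝ) : ℝ := k1 + k2*e + k3*e^2 + (k4+a)*e^3
def Vfun (k1 k2 k3 k4 e b : ℝ) : ℝ := k1 + 2*k2*e + 3*k3*e^2 + (4*k4+b)*e^3
def Wfun (k1 k2 k3 k4 e a b : ℝ) : ℝ := k2 + 2*k3*e + (3*k4+b-a)*e^2
def Shatfun (k1 k2 k3 k4 e a b d : ℝ) : ℝ :=
  k1*(Vfun k1 k2 k3 k4 e b)^3 + k2*e^2*(Wfun k1 k2 k3 k4 e a b)*(Vfun k1 k2 k3 k4 e b)^2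
    + k3*e^4*(Wfun k1 k2 k3 k4 e a b)^2*(Vfun k1 k2 k3 k4 e b)
    + (k4+d)*e^6*(Wfun k1 k2 k3 k4 e a b)^3
def Nfun (k1 k2 k3 k4 e a b d : ℝ) : ℝ :=
  (Vfun k1 k2 k3 k4 e b)^3*((2*k2^2 - k1*k3) + e*(5*k2*k3 - 2*k1*k4 - b*k1 + 2*a*k1)
      + e^2*(3*k3^2 + 6*k2*k4 + b*k2 + 2*a*k2) + e^3*(7*k3*k4 + b*k3 + 3*a*k3)
      + e^4*(4*k4^2 + b*k4 + 4*a*k4 + a*b))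
    - (Ufun k1 k2 k3 k4 e a + 2*e*(Wfun k1 k2 k3 k4 e a b))*(Wfun k1 k2 k3 k4 e a b)
      *(k2*(Vfun k1 k2 k3 k4 e b)^2 + k3*e^2*(Wfun k1 k2 k3 k4 e a b)*(Vfun k1 k2 k3 k4 e b)
        + (k4+d)*e^4*(Wfun k1 k2 k3 k4 e a b)^2)
def Dfun (k1 k2 k3 k4 e a b d : ℝ) : ℝ :=
  (Ufun k1 k2 k3 k4 e a)*(Vfun k1 k2 k3 k4 e b)^4
    - 2*e*(Wfun k1 k2 k3 k4 e a b)*(Shatfun k1 k2 k3 k4 e a b d)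

lemma alg_main (k1 k2 k3 k4 e a b d U V W t S Shat N DD : ℝ)
    (hU : U = k1 + k2*e + k3*e^2 + (k4+a)*e^3)
    (hV : V = k1 + 2*k2*e + 3*k3*e^2 + (4*k4+b)*e^3)
    (hW : W = k2 + 2*k3*e + (3*k4+b-a)*e^2)
    (ht : t = e^2*W/V)
    (hS : S = k1 + k2*t + k3*t^2 + (k4+d)*t^3)
    (hShat : Shat = k1*V^3 + k2*e^2*W*V^2 + k3*e^4*W^2*V + (k4+d)*e^6*W^3)
    (hN : N = V^3*((2*k2^2 - k1*k3) + e*(5*k2*k3 - 2*k1*k4 - b*k1 + 2*a*k1)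
        + e^2*(3*k3^2 + 6*k2*k4 + b*k2 + 2*a*k2) + e^3*(7*k3*k4 + b*k3 + 3*a*k3)
        + e^4*(4*k4^2 + b*k4 + 4*a*k4 + a*b))
      - (U + 2*e*W)*W*(k2*V^2 + k3*e^2*W*V + (k4+d)*e^4*W^2))
    (hDD : DD = U*V^4 - 2*e*W*Shat)
    (he : e ≠ 0) (hU0 : U ≠ 0) (hV0 : V ≠ 0) (hDD0 : DD ≠ 0) :
    (t - t*S/(2*((t*S - e*U)/(t - e)) - V))/e^4 = W*N/(V*DD) := by
  have htS : t*S = e^2*W*Shat/V^4 := by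
    rw [hS, ht, hShat]; field_simp [he, hU0, hV0, hDD0]
  have hVU : V - e*W = U := by rw [hU, hV, hW]; ring
  have hte : t - e = -(e*U)/V := by
    rw [ht, ← hVU]; field_simp [hV0]; ring
  have hd2 : 2*((t*S - e*U)/(t - e)) - V = DD/(U*V^3) := by
    rw [htS, hte, hDD]; field_simp [he, hU0, hV0, hDD0]; ring
  rw [hd2, div_div_eq_mul_div]
  have h2 : t - t*S*(U*V^3)/DD = (t*DD - t*S*(U*V^3))/DD := by field_simp [hDD0]
  rw [h2]
  have h3 : t*DD - t*S*(U*V^3) = e^2*W*(DD - U*Shat)/V := by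
    rw [htS, ht]; field_simp [he, hU0, hV0, hDD0]
  have h4 : DD - U*Shat = e^2*N := by rw [hDD, hN, hShat, hU, hV, hW]; ring
  rw [h3, h4]
  field_simp [he, hV0, hDD0]

lemma tendsto_comp4 {α : Type*} {l : Filter α} {E A B C : α → ℝ} {g : ℝ×ℝ×ℝ×ℝ → ℝ}
    (hg : Continuous g) (hE : Tendsto E l (𝓝 0)) (hA : Tendsto A l (𝓝 0))
    (hB : Tendsto B l (𝓝 0)) (hC : Tendsto C l (𝓝 0)) :
    Tendsto (fun x => g (E x, A x, B x, C x)) l (𝓝 (g (0,0,0,0))) :=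
  (hg.tendsto (0,0,0,0)).comp (hE.prodMk_nhds (hA.prodMk_nhds (hB.prodMk_nhds hC)))

/-- Fourth-order convergence of the method M-4: for a simple zero `γ` of a `C⁴`
function `f` on an open interval `D`, the M-4 map `G` satisfies
`(G x - γ)/(x - γ)⁴ → -((c₃ c₁ - c₂²) c₂ / c₁³)` as `x → γ`, `x ≠ γ`,
where `c m = f⁽ᵐ⁾(γ)/m!`. -/

theorem stmt_8 (f : ℝ → ℝ) (D : Set ℝ) (hD : IsOpen D) (hDconn : D.OrdConnected)
    (γ : ℝ) (hγ : γ ∈ D) (hf : ContDiffOn ℝ 4 f D)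
    (hf0 : f γ = 0) (hf' : deriv f γ ≠ 0)
    (c : ℕ → ℝ) (hc : ∀ m, c m = iteratedDeriv m f γ / (Nat.factorial m))
    (G : ℝ → ℝ)
    (hG : ∀ x, G x =
      (x - f x / deriv f x) -
        f (x - f x / deriv f x) /
          (2 * ((f (x - f x / deriv f x) - f x) / ((x - f x / deriv f x) - x))
            - deriv f x)) :
    Tendsto (fun x => (G x - γ) / (x - γ) ^ 4) (𝓝[≠] γ)
      (𝓝 (-((c 3 * c 1 - (c 2) ^ 2) * c 2 / (c 1) ^ 3))) := by
  have hc1γ : c 1 = deriv f γ := by rw [hc]; simp [iteratedDeriv_one]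
  have hk1 : c 1 ≠ 0 := by rw [hc1γ]; exact hf'
  have hc0 : c 0 = 0 := by rw [hc]; simp [hf0]
  -- ε1 : remainder of f at order 4
  set ε1 : ℝ → ℝ := fun x => if x = γ then 0 else
    (f x - (c 1*(x-γ) + c 2*(x-γ)^2 + c 3*(x-γ)^3 + c 4*(x-γ)^4))/(x-γ)^4 with hε1def
  have key1 : ∀ z, f z = c 1*(z-γ) + c 2*(z-γ)^2 + c 3*(z-γ)^3 + c 4*(z-γ)^4
      + ε1 z*(z-γ)^4 := by
    intro z
    by_cases hz : z = γ
    · subst hz; simp [hε1def, hf0]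
    · simp only [hε1def, if_neg hz]
      rw [div_mul_cancel₀ _ (pow_ne_zero 4 (sub_ne_zero.2 hz))]; ring
  have hT1 : Tendsto ε1 (𝓝 γ) (𝓝 0) := by
    have hP := taylor_peano 4 f D hD γ hγ (by exact_mod_cast hf)
    have hsum : ∀ x : ℝ, (∑ m ∈ Finset.range (4+1),
        iteratedDeriv m f γ / (Nat.factorial m : ℝ) * (x - γ)^m)
        = c 1*(x-γ) + c 2*(x-γ)^2 + c 3*(x-γ)^3 + c 4*(x-γ)^4 := by
      intro x
      simp only [Finset.sum_range_succ, Finset.sum_range_zero]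
      rw [← hc 0, ← hc 1, ← hc 2, ← hc 3, ← hc 4, hc0]
      ring
    have hP' : Tendsto (fun x => (f x - (c 1*(x-γ) + c 2*(x-γ)^2 + c 3*(x-γ)^3
        + c 4*(x-γ)^4))/(x-γ)^4) (𝓝[≠] γ) (𝓝 0) := by
      apply hP.congr; intro x; rw [hsum x]
    rw [← nhdsNE_sup_pure γ, tendsto_sup]
    constructor
    · apply hP'.congr'
      filter_upwards [self_mem_nhdsWithin] with x hx
      simp [hε1def, if_neg (by exact hx : x ≠ γ)]
    · have : ε1 γ = 0 := by simp [hε1def]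
      rw [← this]
      exact tendsto_pure_nhds ε1 γ
  -- ε2 : remainder of deriv f at order 3
  set ε2 : ℝ → ℝ := fun x => if x = γ then 0 else
    (deriv f x - (c 1 + 2*c 2*(x-γ) + 3*c 3*(x-γ)^2 + 4*c 4*(x-γ)^3))/(x-γ)^3 with hε2def
  have key2 : ∀ z, deriv f z = c 1 + 2*c 2*(z-γ) + 3*c 3*(z-γ)^2 + 4*c 4*(z-γ)^3
      + ε2 z*(z-γ)^3 := by
    intro z
    by_cases hz : z = γ
    · subst hz; simp [hε2def, hc1γ]
    · simp only [hε2def, if_neg hz]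
      rw [div_mul_cancel₀ _ (pow_ne_zero 3 (sub_ne_zero.2 hz))]; ring
  have hT2 : Tendsto ε2 (𝓝 γ) (𝓝 0) := by
    have hf3 : ContDiffOn ℝ 3 (deriv f) D := hf.deriv_of_isOpen hD (by norm_num)
    have hP := taylor_peano 3 (deriv f) D hD γ hγ (by exact_mod_cast hf3)
    have e1 : iteratedDeriv 0 (deriv f) γ = c 1 := by
      rw [iteratedDeriv_zero, ← iteratedDeriv_one, hc]
      simp
    have e2 : iteratedDeriv 1 (deriv f) γ = 2 * c 2 := by
      rw [show iteratedDeriv 1 (deriv f) = iteratedDeriv 2 f from (iteratedDeriv_succ' ..).symm,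
        hc]
      norm_num [Nat.factorial]; ring
    have e3 : iteratedDeriv 2 (deriv f) γ = 6 * c 3 := by
      rw [show iteratedDeriv 2 (deriv f) = iteratedDeriv 3 f from (iteratedDeriv_succ' ..).symm,
        hc]
      norm_num [Nat.factorial]; ring
    have e4 : iteratedDeriv 3 (deriv f) γ = 24 * c 4 := by
      rw [show iteratedDeriv 3 (deriv f) = iteratedDeriv 4 f from (iteratedDeriv_succ' ..).symm,
        hc]
      norm_num [Nat.factorial]; ring
    have hsum : ∀ x : ℝ, (∑ m ∈ Finset.range (3+1),
        iteratedDeriv m (deriv f) γ / (Nat.factorial m : ℝ) * (x - γ)^m)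
        = c 1 + 2*c 2*(x-γ) + 3*c 3*(x-γ)^2 + 4*c 4*(x-γ)^3 := by
      intro x
      simp only [Finset.sum_range_succ, Finset.sum_range_zero]
      rw [e1, e2, e3, e4]
      norm_num [Nat.factorial]; ring
    have hP' : Tendsto (fun x => (deriv f x - (c 1 + 2*c 2*(x-γ) + 3*c 3*(x-γ)^2
        + 4*c 4*(x-γ)^3))/(x-γ)^3) (𝓝[≠] γ) (𝓝 0) := by
      apply hP.congr; intro x; rw [hsum x]
    rw [← nhdsNE_sup_pure γ, tendsto_sup]
    constructor
    · apply hP'.congr'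
      filter_upwards [self_mem_nhdsWithin] with x hx
      simp [hε2def, if_neg (by exact hx : x ≠ γ)]
    · have : ε2 γ = 0 := by simp [hε2def]
      rw [← this]
      exact tendsto_pure_nhds ε2 γ
  -- Newton map tends to γ
  have hy : Tendsto (fun x => x - f x / deriv f x) (𝓝 γ) (𝓝 γ) := by
    have hfc : ContinuousAt f γ := hf.continuousOn.continuousAt (hD.mem_nhds hγ)
    have hdc : ContinuousAt (deriv f) γ :=
      (hf.continuousOn_deriv_of_isOpen hD (by norm_num)).continuousAt (hD.mem_nhds hγ)
    have hcy : ContinuousAt (fun x => x - f x / deriv f x) γ :=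
      continuousAt_id.sub (hfc.div hdc hf')
    have := hcy.tendsto
    simpa [hf0] using this
  have hTy : Tendsto (fun x => ε1 (x - f x / deriv f x)) (𝓝 γ) (𝓝 0) := hT1.comp hy
  -- limits of the components along the punctured filter
  set l : Filter ℝ := 𝓝[≠] γ with hldef
  have hE : Tendsto (fun x : ℝ => x - γ) l (𝓝 0) := by
    have := (tendsto_id (x := 𝓝 γ)).sub_const γ
    simp only [sub_self] at this
    exact this.mono_left nhdsWithin_le_nhds
  have ha' : Tendsto ε1 l (𝓝 0) := hT1.mono_left nhdsWithin_le_nhds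
  have hb' : Tendsto ε2 l (𝓝 0) := hT2.mono_left nhdsWithin_le_nhds
  have hd' : Tendsto (fun x => ε1 (x - f x / deriv f x)) l (𝓝 0) :=
    hTy.mono_left nhdsWithin_le_nhds
  -- limits of U, V, W, N, Den
  have hUl : Tendsto (fun x => Ufun (c 1) (c 2) (c 3) (c 4) (x-γ) (ε1 x)) l (𝓝 (c 1)) := by
    have h := tendsto_comp4 (g := fun p : ℝ×ℝ×ℝ×ℝ => Ufun (c 1) (c 2) (c 3) (c 4) p.1 p.2.1)
      (by unfold Ufun; fun_prop) hE ha' hb' hd'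
    simpa [Ufun] using h
  have hVl : Tendsto (fun x => Vfun (c 1) (c 2) (c 3) (c 4) (x-γ) (ε2 x)) l (𝓝 (c 1)) := by
    have h := tendsto_comp4 (g := fun p : ℝ×ℝ×ℝ×ℝ => Vfun (c 1) (c 2) (c 3) (c 4) p.1 p.2.2.1)
      (by unfold Vfun; fun_prop) hE ha' hb' hd'
    simpa [Vfun] using h
  have hWl : Tendsto (fun x => Wfun (c 1) (c 2) (c 3) (c 4) (x-γ) (ε1 x) (ε2 x)) l (𝓝 (c 2)) := by
    have h := tendsto_comp4
      (g := fun p : ℝ×ℝ×ℝ×ℝ => Wfun (c 1) (c 2) (c 3) (c 4) p.1 p.2.1 p.2.2.1)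
      (by unfold Wfun; fun_prop) hE ha' hb' hd'
    simpa [Wfun] using h
  have hNl : Tendsto (fun x => Nfun (c 1) (c 2) (c 3) (c 4) (x-γ) (ε1 x) (ε2 x)
      (ε1 (x - f x / deriv f x))) l (𝓝 ((c 1)^3*(c 2)^2 - (c 1)^4*(c 3))) := by
    have h := tendsto_comp4
      (g := fun p : ℝ×ℝ×ℝ×ℝ => Nfun (c 1) (c 2) (c 3) (c 4) p.1 p.2.1 p.2.2.1 p.2.2.2)
      (by unfold Nfun Ufun Vfun Wfun; fun_prop) hE ha' hb' hd'
    have hval : Nfun (c 1) (c 2) (c 3) (c 4) 0 0 0 0 = (c 1)^3*(c 2)^2 - (c 1)^4*(c 3) := by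
      simp [Nfun, Ufun, Vfun, Wfun]; ring
    dsimp only at h
    rw [hval] at h
    exact h
  have hDl : Tendsto (fun x => Dfun (c 1) (c 2) (c 3) (c 4) (x-γ) (ε1 x) (ε2 x)
      (ε1 (x - f x / deriv f x))) l (𝓝 ((c 1)^5)) := by
    have h := tendsto_comp4
      (g := fun p : ℝ×ℝ×ℝ×ℝ => Dfun (c 1) (c 2) (c 3) (c 4) p.1 p.2.1 p.2.2.1 p.2.2.2)
      (by unfold Dfun Shatfun Ufun Vfun Wfun; fun_prop) hE ha' hb' hd'
    have hval : Dfun (c 1) (c 2) (c 3) (c 4) 0 0 0 0 = (c 1)^5 := by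
      simp [Dfun, Shatfun, Ufun, Vfun, Wfun]; ring
    dsimp only at h
    rw [hval] at h
    exact h
  -- eventually nonzero
  have hUev : ∀ᶠ x in l, Ufun (c 1) (c 2) (c 3) (c 4) (x-γ) (ε1 x) ≠ 0 :=
    hUl.eventually_ne hk1
  have hVev : ∀ᶠ x in l, Vfun (c 1) (c 2) (c 3) (c 4) (x-γ) (ε2 x) ≠ 0 :=
    hVl.eventually_ne hk1
  have hDev : ∀ᶠ x in l, Dfun (c 1) (c 2) (c 3) (c 4) (x-γ) (ε1 x) (ε2 x)
      (ε1 (x - f x / deriv f x)) ≠ 0 :=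
    hDl.eventually_ne (pow_ne_zero 5 hk1)
  -- the eventual identity
  have heq : ∀ᶠ x in l, (G x - γ)/(x-γ)^4
      = Wfun (c 1) (c 2) (c 3) (c 4) (x-γ) (ε1 x) (ε2 x)
        * Nfun (c 1) (c 2) (c 3) (c 4) (x-γ) (ε1 x) (ε2 x) (ε1 (x - f x / deriv f x))
        / (Vfun (c 1) (c 2) (c 3) (c 4) (x-γ) (ε2 x)
          * Dfun (c 1) (c 2) (c 3) (c 4) (x-γ) (ε1 x) (ε2 x) (ε1 (x - f x / deriv f x))) := by
    filter_upwards [self_mem_nhdsWithin, hUev, hVev, hDev] with x hx hU0 hV0 hD0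
    have hex : x - γ ≠ 0 := sub_ne_zero.2 hx
    rw [hG x]
    set yx := x - f x / deriv f x with hyxdef
    have hfx : f x = (x-γ) * Ufun (c 1) (c 2) (c 3) (c 4) (x-γ) (ε1 x) := by
      rw [key1 x]; unfold Ufun; ring
    have hdfx : deriv f x = Vfun (c 1) (c 2) (c 3) (c 4) (x-γ) (ε2 x) := by
      rw [key2 x]; unfold Vfun; ring
    have hfy : f yx = (yx - γ) * (c 1 + c 2*(yx - γ) + c 3*(yx - γ)^2
        + (c 4 + ε1 yx)*(yx - γ)^3) := by
      rw [key1 yx]; ring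
    have hVU : Vfun (c 1) (c 2) (c 3) (c 4) (x-γ) (ε2 x)
        - (x-γ)*Wfun (c 1) (c 2) (c 3) (c 4) (x-γ) (ε1 x) (ε2 x)
        = Ufun (c 1) (c 2) (c 3) (c 4) (x-γ) (ε1 x) := by
      unfold Ufun Vfun Wfun; ring
    have hyγ : yx - γ = (x-γ)^2 * Wfun (c 1) (c 2) (c 3) (c 4) (x-γ) (ε1 x) (ε2 x)
        / Vfun (c 1) (c 2) (c 3) (c 4) (x-γ) (ε2 x) := by
      rw [hyxdef, hfx, hdfx, ← hVU]
      field_simp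
      ring
    rw [show yx - x = (yx - γ) - (x - γ) from by ring, hfy, hfx, hdfx,
      show ∀ q : ℝ, yx - q - γ = yx - γ - q from fun q => by ring]
    exact alg_main (c 1) (c 2) (c 3) (c 4) (x-γ) (ε1 x) (ε2 x) (ε1 yx)
      (Ufun (c 1) (c 2) (c 3) (c 4) (x-γ) (ε1 x))
      (Vfun (c 1) (c 2) (c 3) (c 4) (x-γ) (ε2 x))
      (Wfun (c 1) (c 2) (c 3) (c 4) (x-γ) (ε1 x) (ε2 x))
      (yx - γ)
      (c 1 + c 2*(yx - γ) + c 3*(yx - γ)^2 + (c 4 + ε1 yx)*(yx - γ)^3)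
      (Shatfun (c 1) (c 2) (c 3) (c 4) (x-γ) (ε1 x) (ε2 x) (ε1 yx))
      (Nfun (c 1) (c 2) (c 3) (c 4) (x-γ) (ε1 x) (ε2 x) (ε1 yx))
      (Dfun (c 1) (c 2) (c 3) (c 4) (x-γ) (ε1 x) (ε2 x) (ε1 yx))
      rfl rfl rfl hyγ rfl rfl rfl rfl hex hU0 hV0 hD0
  -- final limit computation
  have hnum : Tendsto (fun x => Wfun (c 1) (c 2) (c 3) (c 4) (x-γ) (ε1 x) (ε2 x)
      * Nfun (c 1) (c 2) (c 3) (c 4) (x-γ) (ε1 x) (ε2 x) (ε1 (x - f x / deriv f x))) l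
      (𝓝 ((c 2) * ((c 1)^3*(c 2)^2 - (c 1)^4*(c 3)))) := hWl.mul hNl
  have hden : Tendsto (fun x => Vfun (c 1) (c 2) (c 3) (c 4) (x-γ) (ε2 x)
      * Dfun (c 1) (c 2) (c 3) (c 4) (x-γ) (ε1 x) (ε2 x) (ε1 (x - f x / deriv f x))) l
      (𝓝 ((c 1) * (c 1)^5)) := hVl.mul hDl
  have hden0 : (c 1) * (c 1)^5 ≠ 0 := mul_ne_zero hk1 (pow_ne_zero 5 hk1)
  have hfinal := hnum.div hden hden0
  rw [show -((c 3 * c 1 - (c 2)^2) * c 2 / (c 1)^3)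
    = (c 2) * ((c 1)^3*(c 2)^2 - (c 1)^4*(c 3)) / ((c 1) * (c 1)^5) from by
      field_simp; ring]
  exact Tendsto.congr' (EventuallyEq.symm heq) hfinal
end

section
/- Let γ be a simple zero (f(γ) = 0, f'(γ) ≠ 0) of a function f : ℝ → ℝ that is four times continuously differentiable on an open interval D containing γ. Define the M-4 iteration map by G(x) = y − f(y)/(2·((f(y) − f(x))/(y − x)) − f'(x)), where y = x − f(x)/f'(x). Then, writing c_m = f^{(m)}(γ)/m!, one has f(G(x))/(x − γ)⁴ → −(c₃·c₁ − c₂²)·c₂/c₁² as x → γ with x ≠ γ. -/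
open Filter Topology Set

private lemma myTendsto_nhds_of_punctured {f : ℝ → ℝ} {a b : ℝ} (h0 : f a = b)
    (h : Tendsto f (𝓝[≠] a) (𝓝 b)) : Tendsto f (𝓝 a) (𝓝 b) := by
  rw [← nhdsNE_sup_pure a]
  refine h.sup ?_
  have := tendsto_pure_nhds f a
  rwa [h0] at this

section auxdefs
variable (f : ℝ → ℝ) (γ : ℝ) (c : ℕ → ℝ)

private noncomputable def fA (t : ℝ) : ℝ :=
  (f (γ + t) - (c 1*t + c 2*t^2 + c 3*t^3 + c 4*t^4))/t^4
private noncomputable def fB (t : ℝ) : ℝ :=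
  (deriv f (γ + t) - (c 1 + 2*c 2*t + 3*c 3*t^2 + 4*c 4*t^3))/t^3
private noncomputable def fU (t : ℝ) : ℝ :=
  c 1 + c 2*t + c 3*t^2 + c 4*t^3 + t^3 * fA f γ c t
private noncomputable def fV (t : ℝ) : ℝ :=
  c 1 + t*(2*c 2 + 3*c 3*t + 4*c 4*t^2 + t^2 * fB f γ c t)
private noncomputable def fW (t : ℝ) : ℝ :=
  c 2 + 2*c 3*t + 3*c 4*t^2 + t^2*(fB f γ c t - fA f γ c t)
private noncomputable def fE (t : ℝ) : ℝ := t^2 * fW f γ c t / fV f γ c t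
private noncomputable def fS (t : ℝ) : ℝ :=
  c 2 + fE f γ c t * (c 3 + c 4 * fE f γ c t + fE f γ c t * fA f γ c (fE f γ c t))
private noncomputable def fT (t : ℝ) : ℝ :=
  fU f γ c t - 2*t*fW f γ c t*(c 1 + fE f γ c t * fS f γ c t)/fV f γ c t
private noncomputable def fK (t : ℝ) : ℝ :=
  c 1*(3*c 3 + 4*c 4*t + t*fB f γ c t) + 2*c 2*(c 2 + c 3*t + c 4*t^2 + t^2*fA f γ c t)
    + t*(c 2 + c 3*t + c 4*t^2 + t^2*fA f γ c t)*(3*c 3 + 4*c 4*t + t*fB f γ c t)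
    - 2*c 1*(2*c 3 + 3*c 4*t + t*(fB f γ c t - fA f γ c t))
private noncomputable def fQ (t : ℝ) : ℝ :=
  fK f γ c t - 2*t*(fW f γ c t)^2*fS f γ c t/fV f γ c t
    - fU f γ c t*fW f γ c t*fS f γ c t/fV f γ c t

end auxdefs

private lemma algMain (γ c1 c2 c3 c4 t a b a2 U V W E S T K Q : ℝ)
    (hU : U = c1 + c2*t + c3*t^2 + c4*t^3 + t^3*a)
    (hV : V = c1 + t*(2*c2 + 3*c3*t + 4*c4*t^2 + t^2*b))
    (hW : W = c2 + 2*c3*t + 3*c4*t^2 + t^2*(b - a))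
    (hE : E = t^2*W/V)
    (hS : S = c2 + E*(c3 + c4*E + E*a2))
    (hT : T = U - 2*t*W*(c1 + E*S)/V)
    (hK : K = c1*(3*c3 + 4*c4*t + t*b) + 2*c2*(c2 + c3*t + c4*t^2 + t^2*a)
      + t*(c2 + c3*t + c4*t^2 + t^2*a)*(3*c3 + 4*c4*t + t*b)
      - 2*c1*(2*c3 + 3*c4*t + t*(b - a)))
    (hQ : Q = K - 2*t*W^2*S/V - U*W*S/V)
    (ht : t ≠ 0) (hu : U ≠ 0) (hv : V ≠ 0) (hTne : T ≠ 0) :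
    (γ + E) - (c1*E + E^2*S)/(2*((c1*E + E^2*S - t*U)/((γ + E) - (γ + t))) - V) - γ
      = t^4*W*Q/(V^2*T) := by
  have hrel1 : V - t*W = U := by rw [hU, hV, hW]; ring
  have hrelK : U*(V - c1) - 2*t*W*c1 = t^2*K := by rw [hU, hV, hW, hK]; ring
  have hEt : (γ + E) - (γ + t) = -(t*U)/V := by
    rw [hE, eq_div_iff hv]
    field_simp
    linear_combination (-t) * hrel1
  have htu : t*U ≠ 0 := mul_ne_zero ht hu
  have hQden : 2*((c1*E + E^2*S - t*U)/((γ + E) - (γ + t))) - V = V*T/U := by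
    rw [hEt, hT, hE]
    field_simp
    ring
  rw [hQden]
  have hVT : V*T ≠ 0 := mul_ne_zero hv hTne
  rw [div_div_eq_mul_div]
  have hE' : E*V = t^2*W := by rw [hE]; field_simp
  have hT' : T*V = U*V - 2*t*W*(c1 + E*S) := by rw [hT]; field_simp
  have hQ' : Q*V = K*V - 2*t*W^2*S - U*W*S := by rw [hQ]; field_simp
  have goal'' : (E*V^2*T - (c1*E + E^2*S)*U*V)*V = (t^4*W*Q)*V := by
    have expand : (E*V^2*T - (c1*E + E^2*S)*U*V)*V
        = (E*V)*(T*V)*V - c1*(E*V)*(U*V) - (E*V)^2*S*U := by ring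
    rw [expand, hE', hT']
    linear_combination (t^2*W*V)*hrelK + (-2*t^3*W^2*S)*hE' + (-(t^4*W))*hQ'
  have goal' : E*V^2*T - (c1*E + E^2*S)*U*V = t^4*W*Q :=
    mul_right_cancel₀ hv goal''
  calc (γ + E) - (c1*E + E^2*S)*U/(V*T) - γ
      = (E*V^2*T - (c1*E + E^2*S)*U*V)/(V^2*T) := by
        field_simp
        ring
    _ = t^4*W*Q/(V^2*T) := by rw [goal']

private lemma myDerivPow (γ : ℝ) (m : ℕ) (x : ℝ) :
    deriv (fun y => (y - γ) ^ m) x = (m : ℝ) * (x - γ) ^ (m - 1) := by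
  have h := ((hasDerivAt_id x).sub_const γ).pow m
  simpa using h.deriv

private lemma myTaylorPeano : ∀ (n : ℕ) (f : ℝ → ℝ) (D : Set ℝ), IsOpen D → ∀ γ ∈ D,
    ContDiffOn ℝ n f D →
    Tendsto (fun x => (f x - ∑ k ∈ Finset.range (n+1),
        iteratedDeriv k f γ / (Nat.factorial k) * (x - γ)^k) / (x - γ)^n)
      (𝓝[≠] γ) (𝓝 0) := by
  intro n
  induction n with
  | zero =>
    intro f D hD γ hγ hf
    simp only [zero_add, pow_zero, div_one, Finset.range_one, Finset.sum_singleton,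
      iteratedDeriv_zero, Nat.factorial_zero, Nat.cast_one, mul_one]
    have hc : ContinuousAt f γ := hf.continuousOn.continuousAt (hD.mem_nhds hγ)
    have h2 := hc.tendsto.sub (tendsto_const_nhds (x := f γ / 1 * 1))
    simp only [div_one, mul_one, sub_self] at h2
    exact h2.mono_left nhdsWithin_le_nhds
  | succ n ih =>
    intro f D hD γ hγ hf
    have hdf : ∀ x ∈ D, DifferentiableAt ℝ f x := fun x hx =>
      ((hf.differentiableOn (by simp)) x hx).differentiableAt
        (hD.mem_nhds hx)
    have hf' : ContDiffOn ℝ n (deriv f) D := hf.deriv_of_isOpen hD (by exact_mod_cast le_rfl)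
    set a : ℕ → ℝ := fun k => iteratedDeriv k f γ / (Nat.factorial k) with ha
    set p : ℝ → ℝ := fun y => ∑ k ∈ Finset.range (n+2), a k * (y - γ)^k with hp
    have hpd : ∀ x : ℝ, HasDerivAt p (∑ k ∈ Finset.range (n+2), a k * ((k:ℝ) * (x - γ)^(k-1))) x := by
      intro x
      apply HasDerivAt.fun_sum
      intro k _
      have h := (((hasDerivAt_id x).sub_const γ).pow k).const_mul (a k)
      simpa [mul_comm, mul_assoc] using h
    have hpγ : p γ = a 0 := by
      have hrfl : p γ = ∑ k ∈ Finset.range (n+2), a k * (γ - γ)^k := rfl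
      rw [hrfl, Finset.sum_eq_single 0]
      · simp
      · intro k _ hk
        simp [zero_pow hk, sub_self]
      · simp
    have hsum : ∀ x : ℝ, (∑ k ∈ Finset.range (n+2), a k * ((k:ℝ) * (x - γ)^(k-1)))
        = ∑ j ∈ Finset.range (n+1), iteratedDeriv j (deriv f) γ / (Nat.factorial j) * (x - γ)^j := by
      intro x
      rw [Finset.sum_range_succ']
      simp only [Nat.cast_zero, zero_mul, mul_zero, add_zero]
      apply Finset.sum_congr rfl
      intro j _
      rw [ha]
      simp only []
      rw [← iteratedDeriv_succ']
      rw [Nat.factorial_succ]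
      have hj : ((j+1 : ℕ) : ℝ) ≠ 0 := by positivity
      have hjf : ((Nat.factorial j : ℕ) : ℝ) ≠ 0 := by
        exact_mod_cast Nat.factorial_ne_zero j
      push_cast
      field_simp
    apply deriv.lhopital_zero_nhdsNE
    · filter_upwards [nhdsWithin_le_nhds (hD.mem_nhds hγ)] with x hx
      exact ((hdf x hx).sub (hpd x).differentiableAt)
    · filter_upwards [self_mem_nhdsWithin] with x hx
      rw [myDerivPow]
      have hx' : x - γ ≠ 0 := sub_ne_zero.mpr hx
      have : ((n+1:ℕ):ℝ) ≠ 0 := by positivity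
      simp only [Nat.add_sub_cancel]
      push_cast
      positivity
    · have hc : ContinuousAt (fun x => f x - p x) γ := by
        apply ContinuousAt.sub
        · exact (hf.continuousOn.continuousAt (hD.mem_nhds hγ))
        · exact (hpd γ).differentiableAt.continuousAt
      have h0 : f γ - p γ = 0 := by
        rw [hpγ, ha]
        simp [iteratedDeriv_zero]
      have := hc.tendsto
      rw [h0] at this
      exact this.mono_left nhdsWithin_le_nhds
    · have : Tendsto (fun x : ℝ => (x - γ) ^ (n+1)) (𝓝 γ) (𝓝 ((γ - γ)^(n+1))) :=
        ((continuous_id.sub continuous_const).pow (n+1)).tendsto γ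
      simp only [sub_self, zero_pow (Nat.succ_ne_zero n)] at this
      exact this.mono_left nhdsWithin_le_nhds
    · have hIH := ih (deriv f) D hD γ hγ hf'
      have h2 : Tendsto (fun x => (deriv f x - ∑ j ∈ Finset.range (n+1),
          iteratedDeriv j (deriv f) γ / (Nat.factorial j) * (x - γ)^j) / (x - γ)^n / ((n:ℝ)+1))
          (𝓝[≠] γ) (𝓝 (0 / ((n:ℝ)+1))) := hIH.div_const _
      rw [zero_div] at h2
      apply h2.congr'
      filter_upwards [nhdsWithin_le_nhds (hD.mem_nhds hγ), self_mem_nhdsWithin] with x hx hx'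
      have hder : deriv (fun y => f y - p y) x = deriv f x - ∑ j ∈ Finset.range (n+1),
          iteratedDeriv j (deriv f) γ / (Nat.factorial j) * (x - γ)^j := by
        rw [← hsum x]
        exact ((hdf x hx).hasDerivAt.sub (hpd x)).deriv
      rw [myDerivPow]
      simp only [Nat.add_sub_cancel]
      rw [hder]
      push_cast
      rw [div_div, mul_comm]

/-- For a simple zero `γ` of a `C⁴` function `f` on an open interval `D`, the M-4 map
`G` satisfies `f(G x)/(x - γ)⁴ → -((c₃ c₁ - c₂²) c₂ / c₁²)` as `x → γ`, `x ≠ γ`,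
where `c m = f⁽ᵐ⁾(γ)/m!`. -/
theorem stmt_9 (f : ℝ → ℝ) (D : Set ℝ) (hD : IsOpen D) (hDconn : D.OrdConnected)
    (γ : ℝ) (hγ : γ ∈ D) (hf : ContDiffOn ℝ 4 f D)
    (hf0 : f γ = 0) (hf' : deriv f γ ≠ 0)
    (c : ℕ → ℝ) (hc : ∀ m, c m = iteratedDeriv m f γ / (Nat.factorial m))
    (G : ℝ → ℝ)
    (hG : ∀ x, G x =
      (x - f x / deriv f x) -
        f (x - f x / deriv f x) /
          (2 * ((f (x - f x / deriv f x) - f x) / ((x - f x / deriv f x) - x))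
            - deriv f x)) :
    Tendsto (fun x => f (G x) / (x - γ) ^ 4) (𝓝[≠] γ)
      (𝓝 (-((c 3 * c 1 - (c 2) ^ 2) * c 2 / (c 1) ^ 2))) := by
  -- basic constants
  have hc1d : c 1 = deriv f γ := by rw [hc 1]; simp [iteratedDeriv_one]
  have hc1ne : c 1 ≠ 0 := by rw [hc1d]; exact hf'
  have hc0 : c 0 = 0 := by rw [hc 0]; simp [iteratedDeriv_zero, hf0]
  have hiD : ∀ k, iteratedDeriv k f γ = (Nat.factorial k : ℝ) * c k := by
    intro k
    rw [hc k]
    field_simp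
  -- smoothness facts
  have hf4 : ContDiffOn ℝ ((4:ℕ)) f D := by exact_mod_cast hf
  have hf3 : ContDiffOn ℝ ((3:ℕ)) (deriv f) D :=
    hf4.deriv_of_isOpen hD (by exact_mod_cast le_rfl)
  -- the map t ↦ γ + t
  have hγt : Tendsto (fun t : ℝ => γ + t) (𝓝[≠] (0:ℝ)) (𝓝[≠] γ) := by
    rw [tendsto_nhdsWithin_iff]
    constructor
    · have h1 : Tendsto (fun t : ℝ => γ + t) (𝓝 0) (𝓝 (γ + 0)) :=
        (continuous_const.add continuous_id).tendsto 0
      simp only [add_zero] at h1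
      exact h1.mono_left nhdsWithin_le_nhds
    · filter_upwards [self_mem_nhdsWithin] with t ht
      simp only [mem_compl_iff, mem_singleton_iff] at ht ⊢
      intro h; exact ht (by linarith)
  -- Taylor expansions
  have hsum4 : ∀ x : ℝ, (∑ k ∈ Finset.range (4+1),
      iteratedDeriv k f γ / (Nat.factorial k : ℝ) * (x - γ)^k)
      = c 1*(x-γ) + c 2*(x-γ)^2 + c 3*(x-γ)^3 + c 4*(x-γ)^4 := by
    intro x
    simp only [Finset.sum_range_succ, Finset.sum_range_zero, hiD, hc0]
    norm_num [Nat.factorial]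
    try ring
  have hsum3 : ∀ x : ℝ, (∑ k ∈ Finset.range (3+1),
      iteratedDeriv k (deriv f) γ / (Nat.factorial k : ℝ) * (x - γ)^k)
      = c 1 + 2*c 2*(x-γ) + 3*c 3*(x-γ)^2 + 4*c 4*(x-γ)^3 := by
    intro x
    simp only [Finset.sum_range_succ, Finset.sum_range_zero, ← iteratedDeriv_succ', hiD]
    norm_num [Nat.factorial]
    ring
  have hA : Tendsto (fA f γ c) (𝓝 0) (𝓝 0) := by
    apply myTendsto_nhds_of_punctured
    · simp [fA, hf0]
    · have h1 := (myTaylorPeano 4 f D hD γ hγ hf4).comp hγt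
      refine h1.congr fun t => ?_
      show (f (γ + t) - ∑ k ∈ Finset.range (4+1),
        iteratedDeriv k f γ / (Nat.factorial k : ℝ) * ((γ + t) - γ)^k) / ((γ + t) - γ)^4
        = fA f γ c t
      rw [hsum4 (γ + t)]
      simp only [fA, add_sub_cancel_left]
  have hB : Tendsto (fB f γ c) (𝓝 0) (𝓝 0) := by
    apply myTendsto_nhds_of_punctured
    · simp [fB, ← hc1d]
    · have h1 := (myTaylorPeano 3 (deriv f) D hD γ hγ hf3).comp hγt
      refine h1.congr fun t => ?_
      show (deriv f (γ + t) - ∑ k ∈ Finset.range (3+1),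
        iteratedDeriv k (deriv f) γ / (Nat.factorial k : ℝ) * ((γ + t) - γ)^k) / ((γ + t) - γ)^3
        = fB f γ c t
      rw [hsum3 (γ + t)]
      simp only [fB, add_sub_cancel_left]
  -- the key pointwise identities
  have hfU : ∀ t : ℝ, f (γ + t) = t * fU f γ c t := by
    intro t
    by_cases ht : t = 0
    · subst ht; simp [hf0]
    · simp only [fU, fA]
      field_simp
      ring
  have hfV : ∀ t : ℝ, deriv f (γ + t) = fV f γ c t := by
    intro t
    by_cases ht : t = 0
    · subst ht; simp [fV, ← hc1d]
    · simp only [fV, fB]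
      field_simp
      ring
  -- limits
  have htup : Tendsto (fun t : ℝ => (t, fA f γ c t, fB f γ c t)) (𝓝 0)
      (𝓝 ((0:ℝ), (0:ℝ), (0:ℝ))) := tendsto_id.prodMk_nhds (hA.prodMk_nhds hB)
  have hUl : Tendsto (fU f γ c) (𝓝 0) (𝓝 (c 1)) := by
    have hcont : Continuous (fun p : ℝ × ℝ × ℝ =>
        c 1 + c 2*p.1 + c 3*p.1^2 + c 4*p.1^3 + p.1^3 * p.2.1) := by fun_prop
    have h := (hcont.tendsto ((0:ℝ), (0:ℝ), (0:ℝ))).comp htup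
    simp [fU] at h ⊢; exact h
  have hVl : Tendsto (fV f γ c) (𝓝 0) (𝓝 (c 1)) := by
    have hcont : Continuous (fun p : ℝ × ℝ × ℝ =>
        c 1 + p.1*(2*c 2 + 3*c 3*p.1 + 4*c 4*p.1^2 + p.1^2 * p.2.2)) := by fun_prop
    have h := (hcont.tendsto ((0:ℝ), (0:ℝ), (0:ℝ))).comp htup
    simp [fV] at h ⊢; exact h
  have hWl : Tendsto (fW f γ c) (𝓝 0) (𝓝 (c 2)) := by
    have hcont : Continuous (fun p : ℝ × ℝ × ℝ =>
        c 2 + 2*c 3*p.1 + 3*c 4*p.1^2 + p.1^2*(p.2.2 - p.2.1)) := by fun_prop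
    have h := (hcont.tendsto ((0:ℝ), (0:ℝ), (0:ℝ))).comp htup
    simp [fW] at h ⊢; exact h
  have hEl : Tendsto (fE f γ c) (𝓝 0) (𝓝 0) := by
    have h := ((tendsto_id.pow 2).mul hWl).div hVl hc1ne
    simp [fE] at h ⊢; exact h
  have hAE : Tendsto (fun t => fA f γ c (fE f γ c t)) (𝓝 0) (𝓝 0) := hA.comp hEl
  have hSl : Tendsto (fS f γ c) (𝓝 0) (𝓝 (c 2)) := by
    have h3 : Tendsto (fun t => c 3 + c 4 * fE f γ c t + fE f γ c t * fA f γ c (fE f γ c t))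
        (𝓝 0) (𝓝 (c 3 + c 4*0 + 0*0)) :=
      ((tendsto_const_nhds (x := c 3)).add ((tendsto_const_nhds (x := c 4)).mul hEl)).add (hEl.mul hAE)
    have h4 := (tendsto_const_nhds (x := c 2)).add (hEl.mul h3)
    simp [fS] at h4 ⊢; exact h4
  have hTl : Tendsto (fT f γ c) (𝓝 0) (𝓝 (c 1)) := by
    have hnum : Tendsto (fun t => 2*t*fW f γ c t*(c 1 + fE f γ c t * fS f γ c t)) (𝓝 0)
        (𝓝 (2*0*c 2*(c 1 + 0*c 2))) :=
      (((tendsto_const_nhds (x := (2:ℝ))).mul tendsto_id).mul hWl).mul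
        ((tendsto_const_nhds (x := c 1)).add (hEl.mul hSl))
    have h := hUl.sub (hnum.div hVl hc1ne)
    simp [fT] at h ⊢; exact h
  have hKl : Tendsto (fK f γ c) (𝓝 0) (𝓝 (2*c 2^2 - c 1*c 3)) := by
    have hcont : Continuous (fun p : ℝ × ℝ × ℝ =>
        c 1*(3*c 3 + 4*c 4*p.1 + p.1*p.2.2) + 2*c 2*(c 2 + c 3*p.1 + c 4*p.1^2 + p.1^2*p.2.1)
        + p.1*(c 2 + c 3*p.1 + c 4*p.1^2 + p.1^2*p.2.1)*(3*c 3 + 4*c 4*p.1 + p.1*p.2.2)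
        - 2*c 1*(2*c 3 + 3*c 4*p.1 + p.1*(p.2.2 - p.2.1))) := by fun_prop
    have h := (hcont.tendsto ((0:ℝ), (0:ℝ), (0:ℝ))).comp htup
    have h2 : Tendsto (fK f γ c) (𝓝 0)
        (𝓝 (c 1*(3*c 3 + 4*c 4*0 + 0*0) + 2*c 2*(c 2 + c 3*0 + c 4*0^2 + 0^2*0)
          + 0*(c 2 + c 3*0 + c 4*0^2 + 0^2*0)*(3*c 3 + 4*c 4*0 + 0*0)
          - 2*c 1*(2*c 3 + 3*c 4*0 + 0*(0-0)))) := h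
    have heq : (c 1*(3*c 3 + 4*c 4*0 + 0*0) + 2*c 2*(c 2 + c 3*0 + c 4*0^2 + 0^2*0)
          + 0*(c 2 + c 3*0 + c 4*0^2 + 0^2*0)*(3*c 3 + 4*c 4*0 + 0*0)
          - 2*c 1*(2*c 3 + 3*c 4*0 + 0*((0:ℝ)-0))) = 2*c 2^2 - c 1*c 3 := by ring
    rwa [heq] at h2
  have hQl : Tendsto (fQ f γ c) (𝓝 0) (𝓝 (c 2^2 - c 3*c 1)) := by
    have h1 : Tendsto (fun t => 2*t*(fW f γ c t)^2*fS f γ c t) (𝓝 0)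
        (𝓝 (2*0*c 2^2*c 2)) :=
      (((tendsto_const_nhds (x := (2:ℝ))).mul tendsto_id).mul (hWl.pow 2)).mul hSl
    have h2 : Tendsto (fun t => fU f γ c t*fW f γ c t*fS f γ c t) (𝓝 0)
        (𝓝 (c 1*c 2*c 2)) := (hUl.mul hWl).mul hSl
    have h := (hKl.sub ((h1.div hVl hc1ne))).sub (h2.div hVl hc1ne)
    have heq : (2*c 2^2 - c 1*c 3 - 2*0*c 2^2*c 2/c 1 - c 1*c 2*c 2/c 1) = c 2^2 - c 3*c 1 := by
      field_simp
      ring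
    rw [← heq]
    simp [fQ] at h ⊢; exact h
  -- eventual nonvanishing
  have hUne : ∀ᶠ t in 𝓝 (0:ℝ), fU f γ c t ≠ 0 := hUl.eventually_ne hc1ne
  have hVne : ∀ᶠ t in 𝓝 (0:ℝ), fV f γ c t ≠ 0 := hVl.eventually_ne hc1ne
  have hTne : ∀ᶠ t in 𝓝 (0:ℝ), fT f γ c t ≠ 0 := hTl.eventually_ne hc1ne
  -- the main identity
  have hmain : ∀ᶠ t in 𝓝[≠] (0:ℝ), G (γ + t) - γ
      = t^4 * fW f γ c t * fQ f γ c t/((fV f γ c t)^2 * fT f γ c t) := by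
    filter_upwards [nhdsWithin_le_nhds hUne, nhdsWithin_le_nhds hVne,
      nhdsWithin_le_nhds hTne, self_mem_nhdsWithin] with t hu hv hT ht0
    have ht : t ≠ 0 := ht0
    have hy : γ + t - f (γ + t)/deriv f (γ + t) = γ + fE f γ c t := by
      rw [hfU t, hfV t]
      have hrel1 : fV f γ c t - t*fW f γ c t = fU f γ c t := by
        simp only [fU, fV, fW]; ring
      simp only [fE]
      field_simp
      linear_combination t * hrel1
    have hfEf : f (γ + fE f γ c t) = c 1 * fE f γ c t + (fE f γ c t)^2 * fS f γ c t := by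
      rw [hfU (fE f γ c t)]
      simp only [fU, fS]
      ring
    rw [hG (γ + t), hy, hfEf, hfU t, hfV t]
    exact algMain γ (c 1) (c 2) (c 3) (c 4) t (fA f γ c t) (fB f γ c t)
      (fA f γ c (fE f γ c t)) (fU f γ c t) (fV f γ c t) (fW f γ c t) (fE f γ c t)
      (fS f γ c t) (fT f γ c t) (fK f γ c t) (fQ f γ c t)
      rfl rfl rfl rfl rfl rfl rfl rfl ht hu hv hT
  -- limit of z
  have hden : (c 1)^2 * c 1 ≠ 0 := mul_ne_zero (pow_ne_zero 2 hc1ne) hc1ne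
  have h4 : Tendsto (fun t : ℝ => t^4) (𝓝 (0:ℝ)) (𝓝 0) := by
    have := tendsto_id.pow (f := fun t : ℝ => t) (l := 𝓝 (0:ℝ)) 4
    simpa using this
  have h0 : Tendsto (fun t => t^4 * fW f γ c t * fQ f γ c t/((fV f γ c t)^2 * fT f γ c t))
      (𝓝 0) (𝓝 (0^4 * c 2 * (c 2^2 - c 3*c 1)/((c 1)^2 * c 1))) :=
    (((tendsto_id.pow 4).mul hWl).mul hQl).div ((hVl.pow 2).mul hTl) hden
  have h0' : Tendsto (fun t => t^4 * fW f γ c t * fQ f γ c t/((fV f γ c t)^2 * fT f γ c t))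
      (𝓝 0) (𝓝 0) := by
    have : ((0:ℝ)^4 * c 2 * (c 2^2 - c 3*c 1)/((c 1)^2 * c 1)) = 0 := by simp
    rwa [this] at h0
  have hmainEq : (fun t => G (γ + t) - γ) =ᶠ[𝓝[≠] (0:ℝ)]
      (fun t => t^4 * fW f γ c t * fQ f γ c t/((fV f γ c t)^2 * fT f γ c t)) := hmain
  have hzl : Tendsto (fun t => G (γ + t) - γ) (𝓝[≠] (0:ℝ)) (𝓝 0) :=
    Tendsto.congr' hmainEq.symm (h0'.mono_left nhdsWithin_le_nhds)
  have hUz : Tendsto (fun t => fU f γ c (G (γ + t) - γ)) (𝓝[≠] (0:ℝ)) (𝓝 (c 1)) :=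
    hUl.comp hzl
  -- final t-version limit
  have hzQ : Tendsto (fun t => fW f γ c t * fQ f γ c t/((fV f γ c t)^2 * fT f γ c t))
      (𝓝 0) (𝓝 (c 2 * (c 2^2 - c 3*c 1)/((c 1)^2 * c 1))) :=
    (hWl.mul hQl).div ((hVl.pow 2).mul hTl) hden
  have hev : ∀ᶠ t in 𝓝[≠] (0:ℝ),
      (fW f γ c t * fQ f γ c t/((fV f γ c t)^2 * fT f γ c t)) * fU f γ c (G (γ + t) - γ)
        = f (G (γ + t))/t^4 := by
    filter_upwards [hmain, self_mem_nhdsWithin] with t heq ht0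
    have ht : t ≠ 0 := ht0
    have hfz : f (G (γ + t)) = (G (γ + t) - γ) * fU f γ c (G (γ + t) - γ) := by
      have h' := hfU (G (γ + t) - γ)
      rw [show γ + (G (γ + t) - γ) = G (γ + t) from by ring] at h'
      exact h'
    rw [hfz, heq]
    rw [show t^4 * fW f γ c t * fQ f γ c t/((fV f γ c t)^2 * fT f γ c t)
      = (fW f γ c t * fQ f γ c t/((fV f γ c t)^2 * fT f γ c t)) * t^4 from by ring]
    rw [mul_right_comm]
    exact (mul_div_cancel_right₀ _ (pow_ne_zero 4 ht)).symm
  have hlim := (hzQ.mono_left nhdsWithin_le_nhds).mul hUz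
  have hfin_t := Tendsto.congr' hev hlim
  have hval : (c 2 * (c 2^2 - c 3*c 1)/((c 1)^2 * c 1)) * c 1
      = -((c 3 * c 1 - (c 2)^2) * c 2 / (c 1)^2) := by
    field_simp
    ring
  rw [hval] at hfin_t
  -- transfer to x
  have hxt : Tendsto (fun x : ℝ => x - γ) (𝓝[≠] γ) (𝓝[≠] (0:ℝ)) := by
    rw [tendsto_nhdsWithin_iff]
    constructor
    · have h1 : Tendsto (fun x : ℝ => x - γ) (𝓝 γ) (𝓝 (γ - γ)) :=
        (continuous_id.sub continuous_const).tendsto γ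
      simp only [sub_self] at h1
      exact h1.mono_left nhdsWithin_le_nhds
    · filter_upwards [self_mem_nhdsWithin] with x hx
      simp only [mem_compl_iff, mem_singleton_iff] at hx ⊢
      exact sub_ne_zero.mpr hx
  have hcomp := hfin_t.comp hxt
  refine hcomp.congr fun x => ?_
  show f (G (γ + (x - γ)))/(x - γ)^4 = f (G x)/(x - γ)^4
  rw [show γ + (x - γ) = x from by ring]
end
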